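/- Let (X,Y) be an absolutely continuous random pair with joint CDF F and marginal CDFs F₁, F₂, and let (X_i,Y_i), i=1,...,4, be i.i.d. copies. Then P(max(X₁,X₂) < min(X₃,X₄), max(Y₁,Y₂) < min(Y₃,Y₄)) = ∫ F² d(2F + 2F₁F₂ − 2FF₁ − 2FF₂ + F²), where the integral is with respect to the measure induced by the function (x,y) ↦ 2F(x,y) + 2F₁(x)F₂(y) − 2F(x,y)F₁(x) − 2F(x,y)F₂(y) + F(x,y)². -/

import Mathlib

open MeasureTheory

lemma meas_cdf (ν : Measure (ℝ × ℝ)) [IsFiniteMeasure ν] (hac : ν ≪ volume) :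
    Measurable (fun p : ℝ × ℝ => ν (Set.Iic p.1 ×ˢ Set.Iic p.2)) := by
  have hf : Measurable (ν.rnDeriv volume) := Measure.measurable_rnDeriv _ _
  have key : ∀ p : ℝ × ℝ, ν (Set.Iic p.1 ×ˢ Set.Iic p.2)
      = ∫⁻ a : ℝ × ℝ, Set.indicator {z : (ℝ × ℝ) × (ℝ × ℝ) | z.2.1 ≤ z.1.1 ∧ z.2.2 ≤ z.1.2}
          (fun z => ν.rnDeriv volume z.2) (p, a) := by
    intro p
    have hs : MeasurableSet (Set.Iic p.1 ×ˢ Set.Iic p.2) :=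
      (measurableSet_Iic.prod measurableSet_Iic)
    rw [← Measure.setLIntegral_rnDeriv hac, ← lintegral_indicator hs _]
    congr 1
  simp only [key]
  apply Measurable.lintegral_prod_right'
  apply Measurable.indicator (hf.comp measurable_snd)
  exact (measurableSet_le measurable_snd.fst measurable_fst.fst).inter
    (measurableSet_le measurable_snd.snd measurable_fst.snd)

lemma iic_eq_iio (ν : Measure (ℝ × ℝ)) (hac : ν ≪ volume) (x y : ℝ) :
    ν (Set.Iic x ×ˢ Set.Iic y) = ν (Set.Iio x ×ˢ Set.Iio y) := by
  have hx : ν ({x} ×ˢ (Set.univ : Set ℝ)) = 0 := by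
    apply hac
    rw [Measure.volume_eq_prod, Measure.prod_prod, Real.volume_singleton, zero_mul]
  have hy : ν ((Set.univ : Set ℝ) ×ˢ {y}) = 0 := by
    apply hac
    rw [Measure.volume_eq_prod, Measure.prod_prod, Real.volume_singleton, mul_zero]
  refine le_antisymm ?_
    (measure_mono (Set.prod_mono Set.Iio_subset_Iic_self Set.Iio_subset_Iic_self))
  have hsub : Set.Iic x ×ˢ Set.Iic y ⊆
      (Set.Iio x ×ˢ Set.Iio y) ∪ ({x} ×ˢ (Set.univ : Set ℝ)) ∪ ((Set.univ : Set ℝ) ×ˢ {y}) := by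
    rintro ⟨a, b⟩ ⟨ha, hb⟩
    rcases lt_or_eq_of_le (show a ≤ x from ha) with h1 | h1
    · rcases lt_or_eq_of_le (show b ≤ y from hb) with h2 | h2
      · exact Or.inl (Or.inl ⟨h1, h2⟩)
      · exact Or.inr ⟨trivial, h2⟩
    · exact Or.inl (Or.inr ⟨h1, trivial⟩)
  calc ν (Set.Iic x ×ˢ Set.Iic y) ≤ _ := measure_mono hsub
    _ ≤ ν ((Set.Iio x ×ˢ Set.Iio y) ∪ ({x} ×ˢ (Set.univ : Set ℝ)))
        + ν ((Set.univ : Set ℝ) ×ˢ {y}) := measure_union_le _ _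
    _ ≤ ν (Set.Iio x ×ˢ Set.Iio y) + ν ({x} ×ˢ (Set.univ : Set ℝ))
        + ν ((Set.univ : Set ℝ) ×ˢ {y}) := add_le_add (measure_union_le _ _) le_rfl
    _ = ν (Set.Iio x ×ˢ Set.Iio y) := by rw [hx, hy, add_zero, add_zero]

theorem max_min_probability_eq_integral
    (ν : Measure (ℝ × ℝ)) [IsProbabilityMeasure ν] (hac : ν ≪ volume)
    (F : ℝ → ℝ → ℝ)
    (hF : ∀ x y, F x y = (ν (Set.Iic x ×ˢ Set.Iic y)).toReal) :
    ((Measure.pi fun _ : Fin 4 => ν)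
        {w | max (w 0).1 (w 1).1 < min (w 2).1 (w 3).1 ∧
             max (w 0).2 (w 1).2 < min (w 2).2 (w 3).2}).toReal
      = ∫ p : ℝ × ℝ, (F p.1 p.2) ^ 2
          ∂(Measure.map (fun q : (ℝ × ℝ) × (ℝ × ℝ) =>
              (min q.1.1 q.2.1, min q.1.2 q.2.2)) (ν.prod ν)) := by
  -- notation
  set A : (ℝ × ℝ) × (ℝ × ℝ) → Set (ℝ × ℝ) := fun q =>
    Set.Iio (min q.1.1 q.2.1) ×ˢ Set.Iio (min q.1.2 q.2.2) with hA
  set S : Set (Fin 4 → ℝ × ℝ) :=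
    {w | max (w 0).1 (w 1).1 < min (w 2).1 (w 3).1 ∧
         max (w 0).2 (w 1).2 < min (w 2).2 (w 3).2} with hS
  set S' : Set (((ℝ × ℝ) × (ℝ × ℝ)) × ((ℝ × ℝ) × (ℝ × ℝ))) :=
    {r | max r.1.1.1 r.1.2.1 < min r.2.1.1 r.2.2.1 ∧
         max r.1.1.2 r.1.2.2 < min r.2.1.2 r.2.2.2} with hS'
  have hS'm : MeasurableSet S' := by
    apply MeasurableSet.inter
    · exact measurableSet_lt ((measurable_fst.fst.fst.max measurable_fst.snd.fst))
        ((measurable_snd.fst.fst.min measurable_snd.snd.fst))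
    · exact measurableSet_lt ((measurable_fst.fst.snd.max measurable_fst.snd.snd))
        ((measurable_snd.fst.snd.min measurable_snd.snd.snd))
  have hg : Measurable (fun q : (ℝ × ℝ) × (ℝ × ℝ) => (min q.1.1 q.2.1, min q.1.2 q.2.2)) :=
    (measurable_fst.fst.min measurable_snd.fst).prodMk
      (measurable_fst.snd.min measurable_snd.snd)
  have mw : ∀ i : Fin 4, Measurable fun w : Fin 4 → ℝ × ℝ => w i :=
    fun i => measurable_pi_apply i
  have hSmeas : MeasurableSet S :=
    (measurableSet_lt (((mw 0).fst).max ((mw 1).fst)) (((mw 2).fst).min ((mw 3).fst))).inter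
      (measurableSet_lt (((mw 0).snd).max ((mw 1).snd)) (((mw 2).snd).min ((mw 3).snd)))
  have key : ∀ q : (ℝ × ℝ) × (ℝ × ℝ),
      ν (Set.Iic (min q.1.1 q.2.1) ×ˢ Set.Iic (min q.1.2 q.2.2)) = ν (A q) :=
    fun q => iic_eq_iio ν hac _ _
  -- step 1 : LHS probability equals ((ν.prod ν).prod (ν.prod ν)) S'
  have step1 : (Measure.pi fun _ : Fin 4 => ν) S = ((ν.prod ν).prod (ν.prod ν)) S' := by
    have hA' := measurePreserving_piCongrLeft (μ := fun _ : Fin 4 => ν) (finSumFinEquiv : Fin 2 ⊕ Fin 2 ≃ Fin 4)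
    have hB := ((measurePreserving_piFinTwo (fun _ : Fin 2 => ν)).prod
      (measurePreserving_piFinTwo (fun _ : Fin 2 => ν))).comp
      (measurePreserving_sumPiEquivProdPi (fun _ : Fin 2 ⊕ Fin 2 => ν))
    rw [← hA'.measure_preimage hSmeas.nullMeasurableSet,
        ← hB.measure_preimage hS'm.nullMeasurableSet]
    congr 1
  -- step 2 : compute  ((ν.prod ν).prod (ν.prod ν)) S'  by slicing
  have step2 : ((ν.prod ν).prod (ν.prod ν)) S'
      = ∫⁻ q, ν (A q) * ν (A q) ∂(ν.prod ν) := by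
    rw [Measure.prod_apply_symm hS'm]
    have hset : ∀ q : (ℝ × ℝ) × (ℝ × ℝ),
        ((fun p => (p, q)) ⁻¹' S') = A q ×ˢ A q := by
      intro q
      ext p
      simp only [hS', hA, Set.mem_preimage, Set.mem_setOf_eq, Set.mem_prod, Set.mem_Iio,
        max_lt_iff, lt_min_iff]
      tauto
    simp only [hset, Measure.prod_prod]
  -- measurability of q ↦ ν (A q)
  have hAm : Measurable (fun q : (ℝ × ℝ) × (ℝ × ℝ) => ν (A q)) := by
    have heq : (fun q : (ℝ × ℝ) × (ℝ × ℝ) => ν (A q))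
        = (fun p : ℝ × ℝ => ν (Set.Iic p.1 ×ˢ Set.Iic p.2)) ∘
          (fun q : (ℝ × ℝ) × (ℝ × ℝ) => (min q.1.1 q.2.1, min q.1.2 q.2.2)) :=
      funext fun q => (key q).symm
    rw [heq]
    exact (meas_cdf ν hac).comp hg
  -- step 3 : rewrite RHS integral
  have hFsm : AEStronglyMeasurable (fun p : ℝ × ℝ => F p.1 p.2 ^ 2)
      (Measure.map (fun q : (ℝ × ℝ) × (ℝ × ℝ) =>
        (min q.1.1 q.2.1, min q.1.2 q.2.2)) (ν.prod ν)) := by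
    have heq : (fun p : ℝ × ℝ => F p.1 p.2 ^ 2)
        = fun p : ℝ × ℝ => ((ν (Set.Iic p.1 ×ˢ Set.Iic p.2)).toReal) ^ 2 :=
      funext fun p => by rw [hF]
    rw [heq]
    exact (((meas_cdf ν hac).ennreal_toReal).pow_const 2).aestronglyMeasurable
  rw [integral_map hg.aemeasurable hFsm]
  simp only [hF, key, ← ENNReal.toReal_pow]
  rw [integral_toReal ((hAm.pow_const 2).aemeasurable)
      (Filter.Eventually.of_forall fun q => ENNReal.pow_lt_top (measure_lt_top ν _))]
  rw [step1, step2]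
  congr 1
  exact lintegral_congr fun q => (pow_two _).symm
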